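/- arXiv:2411.15569 — 2 statements merged into one kernel-verified Lean document; each statement's English description precedes it below -/
import Mathlib

section
/- Let k be a field of characteristic p > 0, a a finite-dimensional k-vector space of dimension d, S̄(a) the truncated symmetric algebra, and N = (p-1)d. For each 0 ≤ i ≤ N, the multiplication pairing S̄^i(a) × S̄^{N-i}(a) → S̄^N(a) ≅ k is non-degenerate in both variables. Consequently dim S̄^i(a) = dim S̄^{N-i}(a). -/
open MvPolynomial

/-- Ideal of `p`-th powers of the basis vectors of a `d`-dimensional vector space `a`,
defining the truncated symmetric algebra `S̄(a) = S(a)/(v^p : v ∈ a)`. -/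
noncomputable def truncD (k : Type*) [Field k] (d p : ℕ) : Ideal (MvPolynomial (Fin d) k) :=
  Ideal.span (Set.range fun i : Fin d => X i ^ p)

/-- Degree-`n` graded component of the truncated symmetric algebra `S̄(a)`. -/
noncomputable def SbarD (k : Type*) [Field k] (d p n : ℕ) :
    Submodule k (MvPolynomial (Fin d) k ⧸ truncD k d p) :=
  Submodule.map (Ideal.Quotient.mkₐ k (truncD k d p)).toLinearMap
    (homogeneousSubmodule (Fin d) k n)

/-! ### Auxiliary material -/

/-- The top exponent `(p-1, ..., p-1)`. -/
noncomputable def topE (d p : ℕ) : Fin d →₀ ℕ :=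
  Finsupp.equivFunOnFinite.symm fun _ => p - 1

lemma topE_apply (d p : ℕ) (j : Fin d) : topE d p j = p - 1 := rfl

lemma sum_univ_eq_degree {d : ℕ} (e : Fin d →₀ ℕ) : ∑ j, e j = e.degree := by
  rw [Finsupp.degree]
  exact (Finset.sum_subset (Finset.subset_univ _)
    (fun x _ hx => Finsupp.notMem_support_iff.mp hx)).symm

lemma degree_topE (d p : ℕ) : (topE d p).degree = (p - 1) * d := by
  rw [← sum_univ_eq_degree]
  simp [topE_apply, mul_comm]

lemma coeff_topE_mul_pow (k : Type*) [Field k] {d p : ℕ} (hp : 0 < p)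
    (g : MvPolynomial (Fin d) k) (i : Fin d) :
    coeff (topE d p) (g * X i ^ p) = 0 := by
  rw [X_pow_eq_monomial, coeff_mul_monomial']
  rw [if_neg]
  intro hle
  have := hle i
  simp [topE_apply, Finsupp.single_eq_same] at this
  omega

lemma coeff_topE_eq_zero_of_mem (k : Type*) [Field k] {d p : ℕ} (hp : 0 < p)
    {f : MvPolynomial (Fin d) k} (hf : f ∈ truncD k d p) :
    coeff (topE d p) f = 0 := by
  have H : ∀ f ∈ truncD k d p, ∀ g : MvPolynomial (Fin d) k,
      coeff (topE d p) (g * f) = 0 := by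
    intro f hf
    refine Submodule.span_induction ?_ ?_ ?_ ?_ hf
    · rintro x ⟨i, rfl⟩ g
      exact coeff_topE_mul_pow k hp g i
    · intro g; simp
    · intro x y hx hy ihx ihy g
      rw [mul_add, coeff_add, ihx g, ihy g, add_zero]
    · intro r x hx ihx g
      rw [smul_eq_mul, ← mul_assoc]
      exact ihx (g * r)
  simpa using H f hf 1

lemma monomial_mem_truncD (k : Type*) [Field k] {d p : ℕ} (hp : 0 < p)
    {e : Fin d →₀ ℕ} (he : ¬ e ≤ topE d p) (c : k) :
    monomial e c ∈ truncD k d p := by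
  rw [Finsupp.le_def] at he
  push_neg at he
  obtain ⟨j, hj⟩ := he
  rw [topE_apply] at hj
  have hpe : p ≤ e j := by omega
  have hle : Finsupp.single j p ≤ e := by
    rw [Finsupp.le_def]
    intro i
    rcases eq_or_ne j i with rfl | h
    · simpa using hpe
    · simp [Finsupp.single_apply, h]
  have heq : monomial e c = monomial (e - Finsupp.single j p) c * X j ^ p := by
    rw [X_pow_eq_monomial, monomial_mul, mul_one, tsub_add_cancel_of_le hle]
  rw [heq]
  exact Ideal.mul_mem_left _ _ (Ideal.subset_span ⟨j, rfl⟩)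

/-- Linear functional on the quotient given by the coefficient of the top monomial. -/
noncomputable def Lbar (k : Type*) [Field k] (d p : ℕ) (hp : 0 < p) :
    (MvPolynomial (Fin d) k ⧸ truncD k d p) →ₗ[k] k :=
  (Submodule.liftQ ((truncD k d p).restrictScalars k) (lcoeff k (topE d p))
      (fun f hf => coeff_topE_eq_zero_of_mem k hp hf)) ∘ₗ
    (Submodule.Quotient.restrictScalarsEquiv k (truncD k d p)).symm.toLinearMap

lemma Lbar_mk (k : Type*) [Field k] {d p : ℕ} (hp : 0 < p) (f : MvPolynomial (Fin d) k) :
    Lbar k d p hp (Ideal.Quotient.mk (truncD k d p) f) = coeff (topE d p) f := by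
  rw [Lbar]
  simp only [LinearMap.comp_apply, LinearEquiv.coe_toLinearMap, ← Ideal.Quotient.mk_eq_mk,
    Submodule.Quotient.restrictScalarsEquiv_symm_mk, Submodule.liftQ_apply, lcoeff_apply]
  rfl

/-- Truncated part of a polynomial: only monomials with all exponents `≤ p - 1`. -/
noncomputable def truncPart (k : Type*) [Field k] {d : ℕ} (p : ℕ)
    (f : MvPolynomial (Fin d) k) : MvPolynomial (Fin d) k :=
  ∑ e ∈ f.support.filter (fun e => e ≤ topE d p), monomial e (coeff e f)

lemma sub_truncPart_mem (k : Type*) [Field k] {d p : ℕ} (hp : 0 < p)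
    (f : MvPolynomial (Fin d) k) : f - truncPart k p f ∈ truncD k d p := by
  have h := Finset.sum_filter_add_sum_filter_not f.support (fun e => e ≤ topE d p)
    (fun e => monomial e (coeff e f))
  rw [support_sum_monomial_coeff] at h
  have : f - truncPart k p f
      = ∑ e ∈ f.support.filter (fun e => ¬ e ≤ topE d p), monomial e (coeff e f) := by
    rw [truncPart]
    exact sub_eq_iff_eq_add'.mpr h.symm
  rw [this]
  exact Submodule.sum_mem _ fun e he =>
    monomial_mem_truncD k hp (Finset.mem_filter.mp he).2 _

/-- Key lemma: nondegeneracy of the pairing against the top coefficient functional. -/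
lemma key (k : Type*) [Field k] {d p : ℕ} (hp : 0 < p) {n : ℕ} (hn : n ≤ (p - 1) * d)
    {x : MvPolynomial (Fin d) k ⧸ truncD k d p} (hx : x ∈ SbarD k d p n) (hx0 : x ≠ 0) :
    ∃ y ∈ SbarD k d p ((p - 1) * d - n), Lbar k d p hp (x * y) ≠ 0 := by
  obtain ⟨f, hf, rfl⟩ := hx
  replace hf : MvPolynomial.IsHomogeneous f n := hf
  have hmkf : (Ideal.Quotient.mkₐ k (truncD k d p)).toLinearMap f
      = Ideal.Quotient.mk (truncD k d p) f := rfl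
  -- find a good exponent
  have hne : (f.support.filter (fun e => e ≤ topE d p)).Nonempty := by
    by_contra h
    rw [Finset.not_nonempty_iff_eq_empty] at h
    apply hx0
    have h1 : truncPart k p f = 0 := by rw [truncPart, h, Finset.sum_empty]
    have h2 : f ∈ truncD k d p := by
      have := sub_truncPart_mem k hp f
      rwa [h1, sub_zero] at this
    rw [hmkf, Ideal.Quotient.eq_zero_iff_mem]
    exact h2
  obtain ⟨e, he⟩ := hne
  obtain ⟨hes, hetop⟩ := Finset.mem_filter.mp he
  have hce : coeff e f ≠ 0 := mem_support_iff.mp hes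
  have hdeg : e.degree = n := by
    have := hf hce
    rw [Finsupp.degree_eq_weight_one]; exact this
  have hetop' : ∀ j, e j ≤ p - 1 := fun j => by
    have := hetop j; rwa [topE_apply] at this
  -- the dual monomial
  set m : Fin d →₀ ℕ := topE d p - e with hm
  have hmdeg : m.degree = (p - 1) * d - n := by
    rw [← sum_univ_eq_degree]
    have : ∀ j : Fin d, m j = topE d p j - e j := fun j => Finsupp.tsub_apply _ _ _
    calc ∑ j, m j = ∑ j, (topE d p j - e j) := Finset.sum_congr rfl fun j _ => this j
      _ = (∑ j, topE d p j) - ∑ j, e j :=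
          Finset.sum_tsub_distrib _ fun j _ => hetop j
      _ = (p - 1) * d - n := by
          rw [sum_univ_eq_degree, sum_univ_eq_degree, degree_topE, hdeg]
  refine ⟨Ideal.Quotient.mk (truncD k d p) (monomial m 1),
    ⟨monomial m 1, isHomogeneous_monomial 1 hmdeg, rfl⟩, ?_⟩
  rw [hmkf, ← map_mul, Lbar_mk]
  -- reduce to the truncated part
  have hsplit : f * monomial m 1
        = truncPart k p f * monomial m 1 + (f - truncPart k p f) * monomial m 1 := by ring
  rw [hsplit, coeff_add]
  have h2 : coeff (topE d p) ((f - truncPart k p f) * monomial m 1) = 0 :=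
    coeff_topE_eq_zero_of_mem k hp
      (Ideal.mul_mem_right _ _ (sub_truncPart_mem k hp f))
  rw [h2, add_zero, coeff_mul_monomial', if_pos (tsub_le_self : m ≤ topE d p)]
  have hcancel : topE d p - m = e := tsub_tsub_cancel_of_le hetop
  rw [hcancel, mul_one]
  have hc1 : coeff e (truncPart k p f) = coeff e f := by
    rw [truncPart, coeff_sum]
    rw [Finset.sum_eq_single_of_mem e he (fun b _ hb => by
      rw [coeff_monomial, if_neg hb])]
    rw [coeff_monomial, if_pos rfl]
  rw [hc1]
  exact hce

lemma SbarD_finite (k : Type*) [Field k] (d p n : ℕ) :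
    FiniteDimensional k (SbarD k d p n) := by
  have hle : homogeneousSubmodule (Fin d) k n ≤ restrictTotalDegree (Fin d) k n := by
    intro f hf
    rw [mem_restrictTotalDegree]
    exact (hf : MvPolynomial.IsHomogeneous f n).totalDegree_le
  have : FiniteDimensional k (homogeneousSubmodule (Fin d) k n) :=
    Submodule.finiteDimensional_of_le hle
  exact Module.Finite.map _ _

/-- The pairing map into the dual. -/
noncomputable def pairMap (k : Type*) [Field k] (d p : ℕ) (hp : 0 < p) (a b : ℕ) :
    SbarD k d p a →ₗ[k] Module.Dual k (SbarD k d p b) :=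
  ((LinearMap.mul k (MvPolynomial (Fin d) k ⧸ truncD k d p)).compr₂
      (Lbar k d p hp)).domRestrict₁₂ _ _

lemma pairMap_apply (k : Type*) [Field k] (d p : ℕ) (hp : 0 < p) (a b : ℕ)
    (x : SbarD k d p a) (y : SbarD k d p b) :
    pairMap k d p hp a b x y = Lbar k d p hp (↑x * ↑y) := rfl

lemma finrank_le_aux (k : Type*) [Field k] (d p : ℕ) (hp : 0 < p) (a b : ℕ)
    (h : ∀ x : SbarD k d p a, x ≠ 0 →
      ∃ y ∈ SbarD k d p b, Lbar k d p hp (↑x * y) ≠ 0) :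
    Module.finrank k (SbarD k d p a) ≤ Module.finrank k (SbarD k d p b) := by
  have inst2 := SbarD_finite k d p b
  have hinj : Function.Injective (pairMap k d p hp a b) := by
    rw [← LinearMap.ker_eq_bot, LinearMap.ker_eq_bot']
    intro x hx
    by_contra hx0
    obtain ⟨y, hy, hL⟩ := h x hx0
    apply hL
    rw [← pairMap_apply k d p hp a b x ⟨y, hy⟩, hx]
    rfl
  calc Module.finrank k (SbarD k d p a)
      ≤ Module.finrank k (Module.Dual k (SbarD k d p b)) :=
        LinearMap.finrank_le_finrank_of_injective hinj
    _ = Module.finrank k (SbarD k d p b) := Subspace.dual_finrank_eq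

/-- For `0 ≤ i ≤ N = (p-1)d`, the multiplication pairing
`S̄^i(a) × S̄^{N-i}(a) → S̄^N(a) ≅ k` is non-degenerate in both variables; consequently
`dim S̄^i(a) = dim S̄^{N-i}(a)`. -/
theorem hochschild_stmt2 (k : Type*) [Field k] (p : ℕ) [CharP k p] (hp : 0 < p) (d i : ℕ)
    (hi : i ≤ (p - 1) * d) :
    (∀ x ∈ SbarD k d p i, x ≠ 0 → ∃ y ∈ SbarD k d p ((p - 1) * d - i), x * y ≠ 0) ∧
    (∀ y ∈ SbarD k d p ((p - 1) * d - i), y ≠ 0 → ∃ x ∈ SbarD k d p i, x * y ≠ 0) ∧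
    Module.finrank k (SbarD k d p i) = Module.finrank k (SbarD k d p ((p - 1) * d - i)) := by
  have hsub : (p - 1) * d - ((p - 1) * d - i) = i := Nat.sub_sub_self hi
  refine ⟨?_, ?_, ?_⟩
  · intro x hx hx0
    obtain ⟨y, hy, hL⟩ := key k hp hi hx hx0
    exact ⟨y, hy, fun h => hL (by rw [h, map_zero])⟩
  · intro y hy hy0
    obtain ⟨x, hx, hL⟩ := key k hp (Nat.sub_le _ _) hy hy0
    rw [hsub] at hx
    refine ⟨x, hx, fun h => hL ?_⟩
    rw [mul_comm] at h
    rw [h, map_zero]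
  · refine le_antisymm ?_ ?_
    · exact finrank_le_aux k d p hp _ _ fun x hx0 =>
        key k hp hi x.2 (fun h => hx0 (Subtype.ext h))
    · refine finrank_le_aux k d p hp _ _ fun y hy0 => ?_
      obtain ⟨x, hx, hL⟩ := key k hp (Nat.sub_le _ _) y.2 (fun h => hy0 (Subtype.ext h))
      rw [hsub] at hx
      exact ⟨x, hx, hL⟩
end

section
/- Let p ≥ 3 be prime, k a field of characteristic p, and b the Lie algebra with basis h, e and [h,e] = 2e. Under the adjoint action of b on the truncated algebra S̄(b) = S(b)/(h^p, e^p), each graded piece S̄^n(b) is a cyclic module over the restricted enveloping algebra u(b): it is generated by h^n for 0 ≤ n ≤ p-1 and by e^{n-p+1} h^{p-1} for p ≤ n ≤ 2p-2. -/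
open MvPolynomial

/-- Ideal `(h^p, e^p)` defining `S̄(b) = S(b)/(h^p, e^p)`, where `X 0 = h`, `X 1 = e`. -/
noncomputable def trunc2 (k : Type*) [Field k] (p : ℕ) : Ideal (MvPolynomial (Fin 2) k) :=
  Ideal.span {X 0 ^ p, X 1 ^ p}

/-- The adjoint action of `e`: the derivation with `e·h = -2e`, `e·e = 0`, i.e.
`ad(e)(h^i e^j) = -2i h^{i-1} e^{j+1}`. -/
noncomputable def adE (k : Type*) [Field k] :
    MvPolynomial (Fin 2) k →ₗ[k] MvPolynomial (Fin 2) k :=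
  (-2 : k) • ((LinearMap.mulLeft k (X 1 : MvPolynomial (Fin 2) k)).comp (pderiv (0 : Fin 2)).toLinearMap)

/-- The adjoint action of `h`: the derivation with `h·h = 0`, `h·e = 2e`, i.e.
`ad(h)(h^i e^j) = 2j h^i e^j`. -/
noncomputable def adH (k : Type*) [Field k] :
    MvPolynomial (Fin 2) k →ₗ[k] MvPolynomial (Fin 2) k :=
  (2 : k) • ((LinearMap.mulLeft k (X 1 : MvPolynomial (Fin 2) k)).comp (pderiv (1 : Fin 2)).toLinearMap)

lemma adE_apply_aux (k : Type*) [Field k] (a b : ℕ) :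
    adE k (X 0 ^ a * X 1 ^ b : MvPolynomial (Fin 2) k)
      = ((-2 : k) * a) • (X 0 ^ (a - 1) * X 1 ^ (b + 1)) := by
  have key : (X 1 : MvPolynomial (Fin 2) k) * pderiv 0 (X 0 ^ a * X 1 ^ b) =
      (a : k) • (X 0 ^ (a-1) * X 1 ^ (b+1)) := by
    rw [pderiv_mul, pderiv_pow, pderiv_pow, pderiv_X_self, pderiv_X_of_ne (by decide)]
    simp only [mul_one, mul_zero, smul_zero, add_zero, nsmul_eq_mul, smul_eq_C_mul, pow_succ]
    rw [map_natCast C]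
    ring
  show (-2 : k) • ((X 1 : MvPolynomial (Fin 2) k) * pderiv 0 (X 0 ^ a * X 1 ^ b)) = _
  rw [key, smul_smul]

lemma chain_aux (k : Type*) [Field k] (p : ℕ) [CharP k p] (hp : p.Prime) (h3 : 3 ≤ p)
    (W : Submodule k (MvPolynomial (Fin 2) k))
    (hWe : ∀ x ∈ W, adE k x ∈ W)
    (a b : ℕ) (hap : a ≤ p - 1) (hW : X 0 ^ a * X 1 ^ b ∈ W) :
    ∀ m, m ≤ a → X 0 ^ (a - m) * X 1 ^ (b + m) ∈ W := by
  intro m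
  induction m with
  | zero => intro _; simpa using hW
  | succ m ih =>
    intro hm
    have hprev := ih (Nat.le_of_succ_le hm)
    have hmem := hWe _ hprev
    rw [adE_apply_aux] at hmem
    have h2 : (2 : k) ≠ 0 := by
      have : ((2 : ℕ) : k) ≠ 0 := by
        rw [Ne, CharP.cast_eq_zero_iff k p]
        intro hdvd
        have := Nat.le_of_dvd (by omega) hdvd
        omega
      simpa using this
    have hc : ((a - m : ℕ) : k) ≠ 0 := by
      rw [Ne, CharP.cast_eq_zero_iff k p]
      intro hdvd
      have h1 : 1 ≤ a - m := by omega
      have h2' : a - m < p := by omega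
      have := Nat.le_of_dvd (by omega) hdvd
      omega
    have hcoe : ((-2 : k) * ((a - m : ℕ) : k)) ≠ 0 := by
      apply mul_ne_zero _ hc
      simpa using h2
    have : X 0 ^ (a - m - 1) * X 1 ^ ((b + m) + 1) ∈ W := by
      have := W.smul_mem ((-2 : k) * ((a - m : ℕ) : k))⁻¹ hmem
      rwa [inv_smul_smul₀ hcoe] at this
    convert this using 3 <;> omega

lemma monomial_eq_two_aux (k : Type*) [Field k] (d : Fin 2 →₀ ℕ) (c : k) :
    (monomial d c : MvPolynomial (Fin 2) k) = c • (X 0 ^ (d 0) * X 1 ^ (d 1)) := by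
  rw [monomial_eq, Finsupp.prod_fintype _ _ (fun i => pow_zero _), Fin.prod_univ_two,
    smul_eq_C_mul]

/-- For a prime `p ≥ 3`, each graded piece `S̄ⁿ(b)` of the truncated algebra of the Borel
`b = ⟨h, e⟩`, `[h,e] = 2e`, is a cyclic `u(b)`-module under the adjoint action, generated
by `hⁿ` for `0 ≤ n ≤ p-1` and by `e^{n-p+1} h^{p-1}` for `p ≤ n ≤ 2p-2`: every subspace
containing the generator and stable under `ad(e)` and `ad(h)` contains all of `S̄ⁿ(b)`
(i.e. the degree-`n` homogeneous component, modulo the truncation ideal). -/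
theorem hochschild_stmt8 (k : Type*) [Field k] (p : ℕ) [CharP k p] (hp : p.Prime)
    (h3 : 3 ≤ p) (n : ℕ) (hn : n ≤ 2 * p - 2) (gen : MvPolynomial (Fin 2) k)
    (hgen : (n ≤ p - 1 ∧ gen = X 0 ^ n) ∨ (p ≤ n ∧ gen = X 1 ^ (n - p + 1) * X 0 ^ (p - 1)))
    (W : Submodule k (MvPolynomial (Fin 2) k)) (hgenW : gen ∈ W)
    (hWe : ∀ x ∈ W, adE k x ∈ W) (hWh : ∀ x ∈ W, adH k x ∈ W) :
    homogeneousSubmodule (Fin 2) k n ≤ W ⊔ (trunc2 k p).restrictScalars k := by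
  intro x hx
  rw [mem_homogeneousSubmodule] at hx
  rw [← support_sum_monomial_coeff x]
  apply Submodule.sum_mem
  intro d hd
  have hdeg : d 0 + d 1 = n := by
    have h1 := hx (mem_support_iff.mp hd)
    change Finsupp.weight (fun _ => 1) d = n at h1
    rw [← Finsupp.degree_eq_weight_one, Finsupp.degree_eq_sum, Fin.sum_univ_two] at h1
    exact h1
  rw [monomial_eq_two_aux]
  apply Submodule.smul_mem
  by_cases h0 : p ≤ d 0
  · apply Submodule.mem_sup_right
    show X 0 ^ (d 0) * X 1 ^ (d 1) ∈ trunc2 k p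
    have heq : (X 0 : MvPolynomial (Fin 2) k) ^ (d 0) * X 1 ^ (d 1)
        = (X 0 ^ (d 0 - p) * X 1 ^ (d 1)) * X 0 ^ p := by
      rw [mul_right_comm, ← pow_add]
      congr 2
      omega
    rw [heq]
    exact Ideal.mul_mem_left _ _ (Ideal.subset_span (Set.mem_insert _ _))
  · by_cases h1 : p ≤ d 1
    · apply Submodule.mem_sup_right
      show X 0 ^ (d 0) * X 1 ^ (d 1) ∈ trunc2 k p
      have heq : (X 0 : MvPolynomial (Fin 2) k) ^ (d 0) * X 1 ^ (d 1)
          = (X 0 ^ (d 0) * X 1 ^ (d 1 - p)) * X 1 ^ p := by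
        rw [mul_assoc, ← pow_add]
        congr 2
        omega
      rw [heq]
      exact Ideal.mul_mem_left _ _ (Ideal.subset_span (Set.mem_insert_of_mem _ rfl))
    · apply Submodule.mem_sup_left
      push_neg at h0 h1
      rcases hgen with ⟨hnp, hg⟩ | ⟨hpn, hg⟩
      · have hW0 : (X 0 : MvPolynomial (Fin 2) k) ^ n * X 1 ^ 0 ∈ W := by
          simpa [hg] using hgenW
        have := chain_aux k p hp h3 W hWe n 0 hnp hW0 (d 1) (by omega)
        convert this using 3 <;> omega
      · have hW0 : (X 0 : MvPolynomial (Fin 2) k) ^ (p - 1) * X 1 ^ (n - p + 1) ∈ W := by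
          rw [mul_comm, ← hg]; exact hgenW
        have := chain_aux k p hp h3 W hWe (p - 1) (n - p + 1) le_rfl hW0 ((p - 1) - d 0)
          (by omega)
        convert this using 3 <;> omega
end
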